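/- Let P = (≻_1,…,≻_n) be an n-voter profile over a finite set A of m alternatives, let δ_1,…,δ_n ≥ 0 be integers, let c ∈ A, let 1 ≤ k ≤ m, let ℓ ≥ 1, and for every a ∈ A \ {c} define λ_a := ℓ + min over feasible profiles Q of (S_k(Q,c) − S_k(Q,a)). Then there exists an ℓ-voter manipulator profile P_M over A such that c has maximum k-approval score in the (n+ℓ)-voter profile (Q, P_M) for every feasible profile Q, if and only if λ_a ≥ 0 for every a ∈ A \ {c} and Σ_{a ∈ A\{c}} min(λ_a, ℓ) ≥ ℓ·(k−1). -/

import Mathlib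

open Finset

abbrev Pref (A : Type*) [Fintype A] := A ≃ Fin (Fintype.card A)

def prefers {A : Type*} [Fintype A] (p : Pref A) (x y : A) : Prop := p x < p y

instance {A : Type*} [Fintype A] (p : Pref A) (x y : A) : Decidable (prefers p x y) := by
  unfold prefers; infer_instance

def rank {A : Type*} [Fintype A] (p : Pref A) (a : A) : ℕ := (p a : ℕ) + 1

def dKT {A : Type*} [Fintype A] (p q : Pref A) : ℕ :=
  (univ.filter (fun z : A × A => prefers p z.1 z.2 ∧ prefers q z.2 z.1)).card

def margin {A : Type*} [Fintype A] {n : ℕ} (P : Fin n → Pref A) (x y : A) : ℤ :=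
  ((univ.filter (fun i => prefers (P i) x y)).card : ℤ) -
  ((univ.filter (fun i => prefers (P i) y x)).card : ℤ)

def Sk {A : Type*} [Fintype A] {n : ℕ} (k : ℕ) (P : Fin n → Pref A) (a : A) : ℕ :=
  (univ.filter (fun i => ((P i) a : ℕ) < k)).card

noncomputable def buckLevel {A : Type*} [Fintype A] {n : ℕ} (P : Fin n → Pref A) : ℕ :=
  sInf {k : ℕ | ∃ a : A, n < 2 * Sk k P a}

def movePerm : {m : ℕ} → Fin m → Fin m → Equiv.Perm (Fin m)
  | 0, i, _ => i.elim0
  | _ + 1, i, j => (finSuccEquiv' i).trans (finSuccEquiv' j).symm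

def RS {A : Type*} [Fintype A] (p : Pref A) (a : A) (k : ℕ) : Pref A :=
  p.trans (movePerm (p a) ⟨min ((p a : ℕ) + k) (Fintype.card A - 1),
    lt_of_le_of_lt (min_le_right _ _) (Nat.sub_lt (Fin.pos (p a)) one_pos)⟩)

def LS {A : Type*} [Fintype A] (p : Pref A) (a : A) (k : ℕ) : Pref A :=
  p.trans (movePerm (p a) ⟨(p a : ℕ) - k,
    lt_of_le_of_lt (Nat.sub_le _ _) (p a).isLt⟩)

def feasSet {A : Type*} [Fintype A] [DecidableEq A] (p : Pref A) (δ : ℕ) : Finset (Pref A) :=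
  univ.filter (fun q => dKT p q ≤ δ)

lemma dKT_self {A : Type*} [Fintype A] (p : Pref A) : dKT p p = 0 := by
  rw [dKT, Finset.card_eq_zero, Finset.filter_eq_empty_iff]
  rintro z -
  rintro ⟨h1, h2⟩
  exact absurd ((show p z.1 < p z.2 from h1).trans h2) (lt_irrefl _)

lemma feasSet_nonempty {A : Type*} [Fintype A] [DecidableEq A] (p : Pref A) (δ : ℕ) :
    (feasSet p δ).Nonempty :=
  ⟨p, by simp [feasSet, dKT_self]⟩

lemma exists_pref_top {A : Type*} [Fintype A] [DecidableEq A] (T : Finset A) :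
    ∃ p : Pref A, ∀ a : A, ((p a : ℕ) < T.card ↔ a ∈ T) := by
  classical
  have hcard : T.card ≤ Fintype.card A := T.card_le_univ.trans_eq Finset.card_univ
  have h : T.card + (Fintype.card A - T.card) = Fintype.card A := Nat.add_sub_cancel' hcard
  have e1 : {x // x ∈ T} ≃ Fin T.card := Fintype.equivFinOfCardEq (Fintype.card_coe T)
  have e2 : {x // ¬ x ∈ T} ≃ Fin (Fintype.card A - T.card) :=
    Fintype.equivFinOfCardEq (by rw [Fintype.card_subtype_compl, Fintype.card_coe])
  refine ⟨(Equiv.sumCompl (· ∈ T)).symm.trans ((e1.sumCongr e2).trans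
    (finSumFinEquiv.trans (finCongr h))), fun a => ?_⟩
  by_cases ha : a ∈ T
  · simp [ha, Equiv.sumCompl_symm_apply_of_pos ha, Fin.is_lt]
  · simp [ha, Equiv.sumCompl_symm_apply_of_neg ha]

lemma card_fin_lt {m k : ℕ} (hk : k ≤ m) :
    (univ.filter (fun j : Fin m => (j : ℕ) < k)).card = k := by
  have h2 : ((Finset.Iio m).filter (fun x => x < k)) =
      ((univ : Finset (Fin m)).filter (fun j : Fin m => (j : ℕ) < k)).map Fin.valEmbedding := by
    rw [← Fin.map_valEmbedding_univ, Finset.filter_map]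
    rfl
  have := congrArg Finset.card h2
  rw [Finset.card_map, Finset.Iio_filter_lt, min_eq_right hk] at this
  simpa using this.symm

lemma sum_Sk {A : Type*} [Fintype A] [DecidableEq A] {n k : ℕ} (hk : k ≤ Fintype.card A)
    (P : Fin n → Pref A) : ∑ a : A, Sk k P a = n * k := by
  classical
  unfold Sk
  simp only [Finset.card_filter]
  rw [Finset.sum_comm]
  have : ∀ i : Fin n, (∑ a : A, if ((P i) a : ℕ) < k then 1 else 0) = k := by
    intro i
    rw [← Finset.card_filter]
    have hb : (univ.filter (fun a : A => ((P i) a : ℕ) < k)).card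
        = (univ.filter (fun j : Fin (Fintype.card A) => (j : ℕ) < k)).card :=
      Finset.card_bij (fun a _ => P i a) (by simp +contextual)
        (fun a _ b _ h => (P i).injective h)
        (fun j hj => ⟨(P i).symm j, by simpa using hj, by simp⟩)
    rw [hb, card_fin_lt hk]
  simp [this, Finset.card_univ]

lemma trim_lemma {A : Type*} [DecidableEq A] (cap : A → ℕ) :
    ∀ (s : Finset A) (N : ℕ), N ≤ ∑ a ∈ s, cap a →
      ∃ nn : A → ℕ, (∀ a, nn a ≤ cap a) ∧ ∑ a ∈ s, nn a = N := by
  intro s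
  induction s using Finset.induction with
  | empty => intro N hN; simp at hN; exact ⟨fun _ => 0, fun _ => Nat.zero_le _, by simp [hN]⟩
  | insert a s ha ih =>
    intro N hN
    rw [Finset.sum_insert ha] at hN
    obtain ⟨nn, hnn, hsum⟩ := ih (N - min (cap a) N) (by omega)
    refine ⟨fun x => if x = a then min (cap a) N else nn x, fun x => ?_, ?_⟩
    · by_cases hx : x = a <;> simp [hx, hnn x, min_le_left]
    · rw [Finset.sum_insert ha, if_pos rfl]
      rw [Finset.sum_congr rfl (fun x hx => if_neg (by rintro rfl; exact ha hx)), hsum]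
      omega

lemma alloc_lemma {A : Type*} [DecidableEq A] (r : ℕ) :
    ∀ (l : ℕ) (s : Finset A) (nn : A → ℕ), (∀ a ∈ s, nn a ≤ l) →
      (∑ a ∈ s, nn a = l * r) → r ≤ s.card →
      ∃ S : Fin l → Finset A, (∀ i, S i ⊆ s ∧ (S i).card = r) ∧
        ∀ a ∈ s, (univ.filter (fun i => a ∈ S i)).card = nn a := by
  intro l
  induction l with
  | zero =>
    intro s nn hle hsum _
    refine ⟨fun i => i.elim0, fun i => i.elim0, fun a ha => ?_⟩
    have : nn a = 0 := Nat.le_zero.mp (hle a ha)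
    simp [this]
  | succ l ih =>
    intro s nn hle hsum hr
    set F := s.filter (fun a => nn a = l + 1) with hF
    set Sp := s.filter (fun a => 1 ≤ nn a) with hSp
    have hSps : Sp ⊆ s := Finset.filter_subset _ _
    have hFSp : F ⊆ Sp := by
      intro a ha; rw [hF, Finset.mem_filter] at ha
      rw [hSp, Finset.mem_filter]; exact ⟨ha.1, by omega⟩
    have hFcard : F.card ≤ r := by
      have h1 : ∑ a ∈ F, nn a = F.card * (l + 1) := by
        rw [Finset.sum_congr rfl (fun a ha => (Finset.mem_filter.mp ha).2)]
        simp [mul_comm, hF]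
      have h2 : ∑ a ∈ F, nn a ≤ ∑ a ∈ s, nn a :=
        Finset.sum_le_sum_of_subset (Finset.filter_subset _ _)
      rw [h1, hsum] at h2
      rw [mul_comm] at h2
      exact Nat.le_of_mul_le_mul_left h2 (Nat.succ_pos l)
    have hSpcard : r ≤ Sp.card := by
      have h1 : ∑ a ∈ s, nn a = ∑ a ∈ Sp, nn a := by
        refine (Finset.sum_subset hSps (fun a ha hna => ?_)).symm
        rw [hSp, Finset.mem_filter] at hna
        by_contra h
        exact hna ⟨ha, by omega⟩
      have h2 : ∑ a ∈ Sp, nn a ≤ Sp.card * (l + 1) := by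
        calc ∑ a ∈ Sp, nn a ≤ ∑ _a ∈ Sp, (l+1) :=
              Finset.sum_le_sum (fun a ha => hle a (hSps ha))
          _ = Sp.card * (l+1) := by simp [mul_comm]
      have h3 : (l+1) * r ≤ Sp.card * (l+1) := by
        rw [← hsum, h1]; exact h2
      rw [mul_comm] at h3
      exact Nat.le_of_mul_le_mul_right h3 (Nat.succ_pos l)
    obtain ⟨T, hFT, hTSp, hTcard⟩ := Finset.exists_subsuperset_card_eq hFSp hFcard hSpcard
    have hTs : T ⊆ s := hTSp.trans hSps
    set n' : A → ℕ := fun a => nn a - (if a ∈ T then 1 else 0) with hn'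
    have h'le : ∀ a ∈ s, n' a ≤ l := by
      intro a ha
      by_cases hmax : nn a = l + 1
      · have : a ∈ T := hFT (by rw [hF, Finset.mem_filter]; exact ⟨ha, hmax⟩)
        simp [hn', this, hmax]
      · have := hle a ha
        simp only [hn']
        split <;> omega
    have hT1 : ∀ a ∈ T, 1 ≤ nn a := fun a ha => (Finset.mem_filter.mp (hTSp ha)).2
    have h'sum : ∑ a ∈ s, n' a = l * r := by
      have hadd : ∑ a ∈ s, (n' a + (if a ∈ T then 1 else 0)) = ∑ a ∈ s, nn a := by
        refine Finset.sum_congr rfl (fun a ha => ?_)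
        by_cases haT : a ∈ T
        · have := hT1 a haT; simp [hn', haT]; omega
        · simp [hn', haT]
      rw [Finset.sum_add_distrib] at hadd
      have hite : ∑ a ∈ s, (if a ∈ T then 1 else 0) = T.card := by
        rw [← Finset.card_filter, Finset.filter_mem_eq_inter,
          Finset.inter_eq_right.mpr hTs]
      rw [hite, hsum, hTcard] at hadd
      have : (l+1) * r = l * r + r := by ring
      omega
    obtain ⟨S', hS'1, hS'2⟩ := ih s n' h'le h'sum hr
    refine ⟨Fin.cases T S', fun i => ?_, fun a ha => ?_⟩
    · induction i using Fin.cases with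
      | zero => simpa using ⟨hTs, hTcard⟩
      | succ j => simpa using hS'1 j
    · rw [Finset.card_filter, Fin.sum_univ_succ]
      have h2 := hS'2 a ha
      rw [Finset.card_filter] at h2
      simp only [Fin.cases_zero, Fin.cases_succ]
      erw [h2]
      by_cases haT : a ∈ T
      · have := hT1 a haT; simp [hn', haT]; omega
      · simp [hn', haT]

theorem kapproval_stable_manipulation_exists {A : Type*} [Fintype A] [DecidableEq A] {n : ℕ}
    (P : Fin n → Pref A) (δ : Fin n → ℕ) (c : A)
    (k : ℕ) (hk1 : 1 ≤ k) (hkm : k ≤ Fintype.card A)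
    (l : ℕ) (hl : 1 ≤ l)
    (μ : A → ℤ)
    (hμ : ∀ a : A, a ≠ c → IsLeast {z : ℤ | ∃ Q : Fin n → Pref A,
        (∀ i, dKT (P i) (Q i) ≤ δ i) ∧ z = (Sk k Q c : ℤ) - (Sk k Q a : ℤ)} (μ a)) :
    (∃ PM : Fin l → Pref A, ∀ Q : Fin n → Pref A, (∀ i, dKT (P i) (Q i) ≤ δ i) →
      ∀ b : A, Sk k Q b + Sk k PM b ≤ Sk k Q c + Sk k PM c) ↔
    ((∀ a : A, a ≠ c → 0 ≤ (l : ℤ) + μ a) ∧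
      (l : ℤ) * ((k : ℤ) - 1) ≤ ∑ a ∈ univ.erase c, min ((l : ℤ) + μ a) (l : ℤ)) := by
  classical
  constructor
  · rintro ⟨PM, hPM⟩
    have hSkle : ∀ b : A, Sk k PM b ≤ l := fun b =>
      (Finset.card_filter_le _ _).trans (by simp)
    have key : ∀ a : A, a ≠ c → (Sk k PM a : ℤ) ≤ μ a + Sk k PM c := by
      intro a ha
      obtain ⟨⟨Q, hQ, hz⟩, _⟩ := hμ a ha
      have h := hPM Q hQ a
      have h' : (Sk k Q a : ℤ) + Sk k PM a ≤ Sk k Q c + Sk k PM c := by exact_mod_cast h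
      linarith [hz.ge]
    constructor
    · intro a ha
      have h1 := key a ha
      have h2 : (Sk k PM c : ℤ) ≤ l := by exact_mod_cast hSkle c
      have h3 : (0 : ℤ) ≤ Sk k PM a := Int.ofNat_nonneg _
      linarith
    · have hsum : Sk k PM c + ∑ a ∈ univ.erase c, Sk k PM a = l * k := by
        rw [Finset.add_sum_erase _ _ (Finset.mem_univ c), sum_Sk hkm]
      have hterm : ∀ a ∈ univ.erase c, (Sk k PM a : ℤ) ≤ min ((l:ℤ) + μ a) l := by
        intro a ha
        have hac := (Finset.mem_erase.mp ha).1
        refine le_min ?_ (by exact_mod_cast hSkle a)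
        have h2 : (Sk k PM c : ℤ) ≤ l := by exact_mod_cast hSkle c
        linarith [key a hac]
      have hS : (l : ℤ) * k - Sk k PM c ≤ ∑ a ∈ univ.erase c, min ((l:ℤ) + μ a) l := by
        calc (l : ℤ) * k - Sk k PM c = ∑ a ∈ univ.erase c, (Sk k PM a : ℤ) := by
              have : ((Sk k PM c + ∑ a ∈ univ.erase c, Sk k PM a : ℕ) : ℤ) = (l*k : ℕ) := by
                exact_mod_cast hsum
              push_cast at this
              linarith
          _ ≤ _ := Finset.sum_le_sum hterm
      have h2 : (Sk k PM c : ℤ) ≤ l := by exact_mod_cast hSkle c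
      calc (l : ℤ) * ((k:ℤ) - 1) = l * k - l := by ring
        _ ≤ l * k - Sk k PM c := by linarith
        _ ≤ _ := hS
  · rintro ⟨h1, h2⟩
    set cap : A → ℕ := fun a => (min ((l:ℤ) + μ a) l).toNat with hcap
    have hcapcast : ∀ a ∈ univ.erase c, ((cap a : ℤ)) = min ((l:ℤ) + μ a) l := by
      intro a ha
      have hac := (Finset.mem_erase.mp ha).1
      exact Int.toNat_of_nonneg (le_min (h1 a hac) (by positivity))
    have hcapsum : l * (k-1) ≤ ∑ a ∈ univ.erase c, cap a := by
      have : ((l * (k-1) : ℕ) : ℤ) ≤ ((∑ a ∈ univ.erase c, cap a : ℕ) : ℤ) := by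
        push_cast
        rw [Finset.sum_congr rfl hcapcast]
        have hk' : ((k - 1 : ℕ) : ℤ) = (k : ℤ) - 1 := by
          push_cast [Nat.cast_sub hk1]; ring
        rw [hk']
        exact h2
      exact_mod_cast this
    obtain ⟨nn, hnncap, hnnsum⟩ := trim_lemma cap (univ.erase c) (l*(k-1)) hcapsum
    have hnnl : ∀ a ∈ univ.erase c, nn a ≤ l := by
      intro a _
      refine (hnncap a).trans ?_
      exact_mod_cast Int.toNat_le.mpr (min_le_right _ _)
    have hrcard : k - 1 ≤ (univ.erase c).card := by
      rw [Finset.card_erase_of_mem (Finset.mem_univ c), Finset.card_univ]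
      omega
    obtain ⟨S, hS1, hS2⟩ := alloc_lemma (k-1) l (univ.erase c) nn hnnl hnnsum hrcard
    have hcS : ∀ i, c ∉ S i := fun i hi =>
      (Finset.mem_erase.mp ((hS1 i).1 hi)).1 rfl
    have hTcard : ∀ i, (insert c (S i)).card = k := by
      intro i
      rw [Finset.card_insert_of_notMem (hcS i), (hS1 i).2]
      omega
    choose PM hPMtop using fun i => exists_pref_top (insert c (S i))
    have hrank : ∀ i b, ((PM i b : ℕ) < k ↔ b ∈ insert c (S i)) := by
      intro i b
      have := hPMtop i b
      rwa [hTcard i] at this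
    have hSkc : Sk k PM c = l := by
      rw [Sk, Finset.filter_true_of_mem, Finset.card_univ, Fintype.card_fin]
      intro i _
      exact (hrank i c).mpr (Finset.mem_insert_self _ _)
    have hSkb : ∀ b : A, b ≠ c → Sk k PM b = nn b := by
      intro b hb
      rw [Sk]
      rw [show (univ.filter (fun i => ((PM i) b : ℕ) < k)) = univ.filter (fun i => b ∈ S i) by
        apply Finset.filter_congr
        intro i _
        rw [hrank i b]
        simp [Finset.mem_insert, hb]]
      exact hS2 b (Finset.mem_erase.mpr ⟨hb, Finset.mem_univ b⟩)
    refine ⟨PM, fun Q hQ b => ?_⟩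
    by_cases hbc : b = c
    · subst hbc; exact le_refl _
    · have hlb : μ b ≤ (Sk k Q c : ℤ) - Sk k Q b := (hμ b hbc).2 ⟨Q, hQ, rfl⟩
      have hnb : (nn b : ℤ) ≤ (l:ℤ) + μ b := by
        have := hcapcast b (Finset.mem_erase.mpr ⟨hbc, Finset.mem_univ b⟩)
        have h3 : (nn b : ℤ) ≤ cap b := by exact_mod_cast hnncap b
        rw [this] at h3
        exact h3.trans (min_le_left _ _)
      rw [hSkc, hSkb b hbc]
      have : ((Sk k Q b + nn b : ℕ) : ℤ) ≤ ((Sk k Q c + l : ℕ) : ℤ) := by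
        push_cast
        linarith
      exact_mod_cast this
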